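/- arXiv:1604.06044 — 4 statements merged into one kernel-verified Lean document; each statement's English description precedes it below -/
import Mathlib

section
/- Let κ be an infinite cardinal, let D be a uniform ultrafilter on κ, let λ1 and λ2 be regular cardinals greater than κ, let N = N1 + N2 be a linear order as in the context, and let ā = ⟨a_{s,t} : s, t ∈ N⟩ ∈ S_c. Then there exist a (λ1+λ2)⁺-saturated dense linear order M and functions f_s : κ → M for s ∈ N such that: whenever s < t in N, a_{s,t} = {i < κ : f_s(i) < f_t(i)}; and the ranges of the functions f_s (s ∈ N) are pairwise disjoint. -/
universe u

open Set

/-- `(J₁, J₂)` is a cut of the linear order `I`. -/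
def IsCut {I : Type u} [LinearOrder I] (J₁ J₂ : Set I) : Prop :=
  J₁.Nonempty ∧ J₂.Nonempty ∧ J₁ ∪ J₂ = univ ∧ Disjoint J₁ J₂ ∧
    (∀ a ∈ J₁, ∀ b ∈ J₂, a < b) ∧
    (∀ a ∈ J₁, ∃ a' ∈ J₁, a < a') ∧ (∀ b ∈ J₂, ∃ b' ∈ J₂, b' < b)

/-- The least cardinality of a subset of `J` cofinal in `J`. -/
noncomputable def cofinality {I : Type u} [LinearOrder I] (J : Set I) : Cardinal.{u} :=
  sInf {c | ∃ S : Set I, S ⊆ J ∧ (∀ x ∈ J, ∃ y ∈ S, x ≤ y) ∧ Cardinal.mk S = c}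

/-- The least cardinality of a subset of `J` coinitial in `J`. -/
noncomputable def coinitiality {I : Type u} [LinearOrder I] (J : Set I) : Cardinal.{u} :=
  sInf {c | ∃ S : Set I, S ⊆ J ∧ (∀ x ∈ J, ∃ y ∈ S, y ≤ x) ∧ Cardinal.mk S = c}
/-- `M` is a `μ⁺`-saturated dense linear order: for any sets `A, B` of size `≤ μ`
(possibly empty) with every element of `A` below every element of `B`, some element
of `M` lies strictly between `A` and `B`. -/
def SatDense (M : Type u) [LinearOrder M] (μ : Cardinal.{u}) : Prop :=
  ∀ A B : Set M, Cardinal.mk A ≤ μ → Cardinal.mk B ≤ μ →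
    (∀ a ∈ A, ∀ b ∈ B, a < b) →
    ∃ x : M, (∀ a ∈ A, a < x) ∧ (∀ b ∈ B, x < b)

/-- The suborder `S` of `M` is a `μ`-saturated dense linear order: for all `A, B ⊆ S`
of cardinality `< μ` with every element of `A` below every element of `B`, some
element of `S` lies strictly between `A` and `B`. -/
def SatDenseOn {M : Type u} [LinearOrder M] (S : Set M) (μ : Cardinal.{u}) : Prop :=
  ∀ A B : Set M, A ⊆ S → B ⊆ S → Cardinal.mk A < μ → Cardinal.mk B < μ →
    (∀ a ∈ A, ∀ b ∈ B, a < b) →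
    ∃ x ∈ S, (∀ a ∈ A, a < x) ∧ (∀ b ∈ B, x < b)

/-- Membership in `S_c`: a family `⟨a s t : s, t ∈ N⟩` of subsets of `κ`
satisfying conditions (i)-(iv). -/
def InS {κ : Type u} (D : Ultrafilter κ) {N : Type u} [LinearOrder N]
    (a : N → N → Set κ) : Prop :=
  (∀ s, a s s = ∅) ∧
  (∀ s t, s ≠ t → a s t = (a t s)ᶜ) ∧
  (∀ s t, s < t → a s t ∈ (D : Filter κ)) ∧
  (∀ s₁ s₂ s₃, s₁ < s₂ → s₂ < s₃ →
    a s₁ s₂ ∩ a s₂ s₃ ⊆ a s₁ s₃ ∧ a s₃ s₂ ∩ a s₂ s₁ ⊆ a s₃ s₁)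

/-- The order of `N⁺ = N₁ + {s⁎} + N₂`, where `s⁎` is a new point (the element
`Sum.inr ()`) inserted between the initial segment `N₁` and its complement `N₂`. -/
def ltPlus {N : Type u} [LinearOrder N] (N₁ : Set N) :
    N ⊕ Unit → N ⊕ Unit → Prop
  | Sum.inl s, Sum.inl t => s < t
  | Sum.inl s, Sum.inr _ => s ∈ N₁
  | Sum.inr _, Sum.inl t => t ∉ N₁
  | Sum.inr _, Sum.inr _ => False

/-- The extended family `ā¹ = ā * b̄` on `N⁺`: it agrees with `a` on `N`, and
`a¹ s s⁎ = b s`, `a¹ s⁎ s = κ \ b s` for `s ∈ N`, and `a¹ s⁎ s⁎ = ∅`. -/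
def aExt {κ N : Type u} (a : N → N → Set κ) (b : N → Set κ) :
    N ⊕ Unit → N ⊕ Unit → Set κ
  | Sum.inl s, Sum.inl t => a s t
  | Sum.inl s, Sum.inr _ => b s
  | Sum.inr _, Sum.inl t => (b t)ᶜ
  | Sum.inr _, Sum.inr _ => ∅

/-- `b̄ = ⟨b s : s ∈ N⟩` is a `c`-solution of `ā`: the extended family `ā¹` satisfies
conditions (i)-(iv) on `N⁺`. -/
def IsSolution {κ : Type u} (D : Ultrafilter κ) {N : Type u} [LinearOrder N]
    (N₁ : Set N) (a : N → N → Set κ) (b : N → Set κ) : Prop :=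
  (∀ s, aExt a b s s = ∅) ∧
  (∀ s t, s ≠ t → aExt a b s t = (aExt a b t s)ᶜ) ∧
  (∀ s t, ltPlus N₁ s t → aExt a b s t ∈ (D : Filter κ)) ∧
  (∀ s₁ s₂ s₃, ltPlus N₁ s₁ s₂ → ltPlus N₁ s₂ s₃ →
    aExt a b s₁ s₂ ∩ aExt a b s₂ s₃ ⊆ aExt a b s₁ s₃ ∧
    aExt a b s₃ s₂ ∩ aExt a b s₂ s₁ ⊆ aExt a b s₃ s₁)

/-- `ā` is `c`-solvable if it has a `c`-solution. -/
def Solvable {κ : Type u} (D : Ultrafilter κ) {N : Type u} [LinearOrder N]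
    (N₁ : Set N) (a : N → N → Set κ) : Prop :=
  ∃ b : N → Set κ, IsSolution D N₁ a b

open Cardinal Set

namespace SatRep
/-- A linear order from a strict total relation, with `lt` definitionally `r`. -/
noncomputable def mkLin {X : Type u} (r : X → X → Prop) (irr : ∀ x, ¬r x x)
    (tr : ∀ {x y z}, r x y → r y z → r x z)
    (tot : ∀ x y, x ≠ y → r x y ∨ r y x) : LinearOrder X where
  le x y := x = y ∨ r x y
  lt := r
  le_refl x := Or.inl rfl
  le_trans x y z h h' := by
    rcases h with rfl | h
    · exact h'
    · rcases h' with rfl | h'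
      · exact Or.inr h
      · exact Or.inr (tr h h')
  lt_iff_le_not_ge x y := by
    constructor
    · intro h
      refine ⟨Or.inr h, ?_⟩
      rintro (rfl | h')
      · exact irr _ h
      · exact irr _ (tr h h')
    · rintro ⟨(rfl | h), hn⟩
      · exact absurd (Or.inl rfl) hn
      · exact h
  le_antisymm x y h h' := by
    rcases h with rfl | h
    · rfl
    · rcases h' with rfl | h'
      · rfl
      · exact absurd (tr h h') (irr _)
  le_total x y := by
    by_cases hxy : x = y
    · exact Or.inl (Or.inl hxy)
    · rcases tot x y hxy with h | h
      · exact Or.inl (Or.inr h)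
      · exact Or.inr (Or.inr h)
  toDecidableLE := fun _ _ => Classical.propDecidable _

section Flt

variable {ι : Type u} [LinearOrder ι]

/-- Lexicographic strict order on `ι → Bool`. -/
def flt (f g : ι → Bool) : Prop :=
  ∃ β, (∀ δ, δ < β → f δ = g δ) ∧ f β = false ∧ g β = true

theorem flt_irrefl (f : ι → Bool) : ¬flt f f := by
  rintro ⟨β, -, h1, h2⟩
  rw [h1] at h2
  exact Bool.false_ne_true h2

theorem flt_trans {f g h : ι → Bool} : flt f g → flt g h → flt f h := by
  rintro ⟨β₁, e₁, hf1, hg1⟩ ⟨β₂, e₂, hg2, hh2⟩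
  rcases lt_trichotomy β₁ β₂ with hlt | rfl | hlt
  · refine ⟨β₁, fun δ hδ => (e₁ δ hδ).trans (e₂ δ (hδ.trans hlt)), hf1, ?_⟩
    rw [← e₂ β₁ hlt]
    exact hg1
  · rw [hg2] at hg1
    exact absurd hg1 Bool.false_ne_true
  · refine ⟨β₂, fun δ hδ => (e₁ δ (hδ.trans hlt)).trans (e₂ δ hδ), ?_, hh2⟩
    rw [e₁ β₂ hlt]
    exact hg2

theorem flt_total [WellFoundedLT ι] {f g : ι → Bool} (hne : f ≠ g) : flt f g ∨ flt g f := by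
  have hs : {β | f β ≠ g β}.Nonempty := by
    by_contra hc
    rw [Set.not_nonempty_iff_eq_empty] at hc
    refine hne (funext fun β => ?_)
    by_contra hb
    exact absurd (hc ▸ hb : β ∈ (∅ : Set ι)) (Set.notMem_empty β)
  set β := (wellFounded_lt (α := ι)).min _ hs with hβ
  have hmem : f β ≠ g β := (wellFounded_lt (α := ι)).min_mem _ hs
  have hagr : ∀ δ, δ < β → f δ = g δ := by
    intro δ hδ
    by_contra hd
    exact (wellFounded_lt (α := ι)).not_lt_min _ hd hδ
  rcases Bool.eq_false_or_eq_true (f β) with hf | hf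
  · rcases Bool.eq_false_or_eq_true (g β) with hg | hg
    · exact absurd (hf.trans hg.symm) hmem
    · exact Or.inr ⟨β, fun δ hδ => (hagr δ hδ).symm, hg, hf⟩
  · rcases Bool.eq_false_or_eq_true (g β) with hg | hg
    · exact Or.inl ⟨β, hagr, hf, hg⟩
    · exact absurd (hf.trans hg.symm) hmem

end Flt

section Qset
variable {ι : Type u} [LinearOrder ι]

/-- Sequences with a last `true`. -/
def Qset (ι : Type u) [LinearOrder ι] : Type u :=
  {f : ι → Bool // ∃ β, f β = true ∧ ∀ δ, β < δ → f δ = false}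

noncomputable instance Qset.linearOrder [WellFoundedLT ι] : LinearOrder (Qset ι) :=
  mkLin (fun x y => flt x.1 y.1) (fun x => flt_irrefl x.1)
    (fun h h' => flt_trans h h')
    (fun _ _ hne => flt_total (fun h => hne (Subtype.ext h)))

theorem Qset.lt_iff [WellFoundedLT ι] {x y : Qset ι} : x < y ↔ flt x.1 y.1 := Iff.rfl

open Classical in
/-- Lexicographic supremum of a set of boolean sequences. -/
noncomputable def hatx [WellFoundedLT ι] (A : Set (ι → Bool)) : ι → Bool :=
  (wellFounded_lt (α := ι)).fix fun β ih =>
    decide (∃ f ∈ A, f β = true ∧ ∀ δ, ∀ h : δ < β, f δ = ih δ h)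

open Classical in
theorem hatx_true_iff [WellFoundedLT ι] (A : Set (ι → Bool)) (β : ι) :
    hatx A β = true ↔ ∃ f ∈ A, f β = true ∧ ∀ δ, δ < β → f δ = hatx A δ := by
  classical
  conv_lhs => rw [hatx, WellFounded.fix_eq]
  rw [decide_eq_true_eq]
  exact Iff.rfl

end Qset


section SatQ
variable {ι : Type u} [LinearOrder ι] [WellFoundedLT ι]

theorem satQ {μ : Cardinal.{u}} (hμ : ℵ₀ ≤ μ)
    (hbdd : ∀ T : Set ι, #T ≤ μ → ∃ γ : ι, ∀ β ∈ T, β < γ) :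
    SatDense (Qset ι) μ := by
  intro A B hA hB hAB
  classical
  -- last `true` position of an element of `Qset`
  let lastOf : Qset ι → ι := fun g => Classical.choose g.2
  have hlast : ∀ g : Qset ι, g.1 (lastOf g) = true ∧ ∀ δ, lastOf g < δ → g.1 δ = false :=
    fun g => Classical.choose_spec g.2
  -- a bound γ above all supports
  obtain ⟨γ, hγ⟩ : ∃ γ : ι, ∀ β ∈ lastOf '' (A ∪ B), β < γ := by
    refine hbdd _ ?_
    refine le_trans mk_image_le ?_
    refine le_trans (mk_union_le A B) ?_
    calc #A + #B ≤ μ + μ := add_le_add hA hB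
    _ = μ := add_eq_self hμ
  have hvan : ∀ g ∈ A ∪ B, ∀ δ, γ ≤ δ → g.1 δ = false := by
    intro g hg δ hδ
    exact (hlast g).2 δ (lt_of_lt_of_le (hγ _ (mem_image_of_mem _ hg)) hδ)
  set xh : ι → Bool := hatx (Subtype.val '' A) with hxhdef
  have hxhvan : ∀ β, γ ≤ β → xh β = false := by
    intro β hβ
    cases hb : xh β
    · rfl
    · exfalso
      obtain ⟨f, ⟨g, hgA, rfl⟩, hfβ, -⟩ := (hatx_true_iff _ β).1 hb
      rw [hvan g (Or.inl hgA) β hβ] at hfβ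
      exact Bool.false_ne_true hfβ
  have hub : ∀ a ∈ A, ¬ flt xh a.1 := by
    rintro a ha ⟨β, he, hxf, hat⟩
    have : xh β = true :=
      (hatx_true_iff _ β).2 ⟨a.1, mem_image_of_mem _ ha, hat, fun δ hδ => (he δ hδ).symm⟩
    rw [hxf] at this
    exact Bool.false_ne_true this
  have hbub : ∀ b ∈ B, ¬ flt b.1 xh := by
    rintro b hb ⟨β, he, hbf, hxt⟩
    obtain ⟨f, ⟨c, hcA, rfl⟩, hfβ, hagr⟩ := (hatx_true_iff _ β).1 hxt
    have h1 : flt b.1 c.1 := ⟨β, fun δ hδ => (he δ hδ).trans (hagr δ hδ).symm, hbf, hfβ⟩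
    have h2 : flt c.1 b.1 := Qset.lt_iff.1 (hAB c hcA b hb)
    exact flt_irrefl _ (flt_trans h1 h2)
  by_cases hb0 : ∃ b ∈ B, b.1 = xh
  · obtain ⟨b₀, hb₀B, hb₀⟩ := hb0
    by_cases ha0 : ∃ c ∈ A, c.1 = xh
    · exfalso
      obtain ⟨a₀, ha₀A, ha₀⟩ := ha0
      have := Qset.lt_iff.1 (hAB a₀ ha₀A b₀ hb₀B)
      rw [ha₀, hb₀] at this
      exact flt_irrefl _ this
    · have hagt : ∀ c ∈ A, flt c.1 xh := by
        intro c hc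
        have hne : c.1 ≠ xh := fun h => ha0 ⟨c, hc, h⟩
        rcases flt_total hne with h | h
        · exact h
        · exact absurd h (hub c hc)
      set β' := lastOf b₀ with hβ'def
      have hβ'γ : β' < γ := hγ _ (mem_image_of_mem _ (Or.inr hb₀B))
      have hxhβ' : xh β' = true := by rw [← hb₀]; exact (hlast b₀).1
      have hxhafter : ∀ δ, β' < δ → xh δ = false := by
        intro δ hδ; rw [← hb₀]; exact (hlast b₀).2 δ hδ
      set y : ι → Bool := fun β => if β < β' then xh β else decide (β' < β ∧ β ≤ γ) with hy
      have hyb : ∀ β, β < β' → y β = xh β := by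
        intro β h; simp only [hy]; rw [if_pos h]
      have hya : ∀ β, ¬ β < β' → y β = decide (β' < β ∧ β ≤ γ) := by
        intro β h; simp only [hy]; rw [if_neg h]
      have hyQ : ∃ β, y β = true ∧ ∀ δ, β < δ → y δ = false := by
        refine ⟨γ, ?_, ?_⟩
        · rw [hya γ (fun h => absurd (h.trans hβ'γ) (lt_irrefl γ))]
          exact decide_eq_true ⟨hβ'γ, le_refl γ⟩
        · intro δ hδ
          rw [hya δ (fun h => absurd (hβ'γ.trans hδ) (asymm h))]
          exact decide_eq_false (fun hc => absurd hδ (not_lt.2 hc.2))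
      have hAy : ∀ c ∈ A, flt c.1 y := by
        intro c hc
        obtain ⟨δa, he, h0, h1⟩ := hagt c hc
        have hδaβ' : δa ≤ β' := by
          by_contra hcon
          rw [hxhafter δa (lt_of_not_ge hcon)] at h1
          exact Bool.false_ne_true h1
        rcases lt_or_eq_of_le hδaβ' with hlt | heq
        · refine ⟨δa, ?_, h0, ?_⟩
          · intro δ hδ
            rw [hyb δ (hδ.trans hlt)]
            exact he δ hδ
          · rw [hyb δa hlt]; exact h1
        · have hEne : {δ | β' < δ ∧ c.1 δ = false}.Nonempty :=
            ⟨γ, hβ'γ, hvan c (Or.inl hc) γ (le_refl γ)⟩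
          set δ₁ := (wellFounded_lt (α := ι)).min _ hEne with hδ₁def
          obtain ⟨hδ₁β', hδ₁false⟩ : β' < δ₁ ∧ c.1 δ₁ = false :=
            (wellFounded_lt (α := ι)).min_mem _ hEne
          have hδ₁min : ∀ δ, β' < δ → c.1 δ = false → ¬ δ < δ₁ := by
            intro δ hδ1 hδ2
            exact (wellFounded_lt (α := ι)).not_lt_min {δ | β' < δ ∧ c.1 δ = false} (x := δ) ⟨hδ1, hδ2⟩
          have hδ₁γ : δ₁ ≤ γ := by
            by_contra hcon
            exact hδ₁min γ hβ'γ (hvan c (Or.inl hc) γ (le_refl γ)) (lt_of_not_ge hcon)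
          refine ⟨δ₁, ?_, hδ₁false, ?_⟩
          · intro δ hδ
            rcases lt_trichotomy δ β' with h | h | h
            · rw [hyb δ h, ← he δ (heq ▸ h)]
            · have hnlt : ¬ δ < β' := by intro hh; rw [h] at hh; exact lt_irrefl β' hh
              rw [hya δ hnlt]
              have h0' : c.1 δ = false := by rw [h, ← heq]; exact h0
              rw [h0']
              refine (decide_eq_false ?_).symm
              intro hc'
              have := hc'.1
              rw [h] at this
              exact lt_irrefl β' this
            · rw [hya δ (asymm h), decide_eq_true ⟨h, le_trans (le_of_lt hδ) hδ₁γ⟩]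
              cases hval : c.1 δ
              · exact absurd hδ (hδ₁min δ h hval)
              · rfl
          · rw [hya δ₁ (asymm hδ₁β')]
            exact decide_eq_true ⟨hδ₁β', hδ₁γ⟩
      have hyxh : flt y xh := by
        refine ⟨β', ?_, ?_, hxhβ'⟩
        · intro δ hδ; exact hyb δ hδ
        · rw [hya β' (lt_irrefl β')]
          exact decide_eq_false (fun hc => lt_irrefl β' hc.1)
      have hBy : ∀ b ∈ B, flt y b.1 := by
        intro b hb
        rcases eq_or_ne b.1 xh with heq | hne
        · rw [heq]; exact hyxh
        · rcases flt_total hne with h | h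
          · exact absurd h (hbub b hb)
          · exact flt_trans hyxh h
      exact ⟨⟨y, hyQ⟩, fun c hc => Qset.lt_iff.2 (hAy c hc),
        fun b hb => Qset.lt_iff.2 (hBy b hb)⟩
  · -- no b equals xh : use xh with an extra true at γ
    have hbgt : ∀ b ∈ B, flt xh b.1 := by
      intro b hb
      have hne : b.1 ≠ xh := fun h => hb0 ⟨b, hb, h⟩
      rcases flt_total hne with h | h
      · exact absurd h (hbub b hb)
      · exact h
    set y : ι → Bool := fun β => if β = γ then true else xh β with hy
    have hyg : y γ = true := by simp [hy]
    have hyn : ∀ β, β ≠ γ → y β = xh β := by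
      intro β h; simp only [hy]; rw [if_neg h]
    have hyQ : ∃ β, y β = true ∧ ∀ δ, β < δ → y δ = false := by
      refine ⟨γ, hyg, fun δ hδ => ?_⟩
      rw [hyn δ (ne_of_gt hδ)]
      exact hxhvan δ (le_of_lt hδ)
    have hAy : ∀ c ∈ A, flt c.1 y := by
      intro c hc
      rcases eq_or_ne c.1 xh with heq | hne
      · refine ⟨γ, ?_, hvan c (Or.inl hc) γ (le_refl γ), hyg⟩
        intro δ hδ
        rw [hyn δ (ne_of_lt hδ), ← heq]
      · have hflt : flt c.1 xh := by
          rcases flt_total hne with h | h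
          · exact h
          · exact absurd h (hub c hc)
        obtain ⟨β, he, h0, h1⟩ := hflt
        have hβγ : β < γ := by
          by_contra hcon
          rw [hxhvan β (le_of_not_gt hcon)] at h1
          exact Bool.false_ne_true h1
        refine ⟨β, ?_, h0, ?_⟩
        · intro δ hδ
          rw [hyn δ (ne_of_lt (hδ.trans hβγ))]
          exact he δ hδ
        · rw [hyn β (ne_of_lt hβγ)]; exact h1
    have hBy : ∀ b ∈ B, flt y b.1 := by
      intro b hb
      obtain ⟨β, he, h0, h1⟩ := hbgt b hb
      have hβγ : β < γ := by
        by_contra hcon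
        rw [hvan b (Or.inr hb) β (le_of_not_gt hcon)] at h1
        exact Bool.false_ne_true h1
      refine ⟨β, ?_, ?_, h1⟩
      · intro δ hδ
        rw [hyn δ (ne_of_lt (hδ.trans hβγ))]
        exact he δ hδ
      · rw [hyn β (ne_of_lt hβγ)]; exact h0
    exact ⟨⟨y, hyQ⟩, fun c hc => Qset.lt_iff.2 (hAy c hc),
      fun b hb => Qset.lt_iff.2 (hBy b hb)⟩

end SatQ

section Low
variable {X : Type u} [LinearOrder X]

/-- The complete linear order of lower sets of `X`. -/
def Low (X : Type u) [LinearOrder X] : Type u := {s : Set X // IsLowerSet s}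

noncomputable instance Low.linearOrder : LinearOrder (Low X) where
  le x y := x.1 ⊆ y.1
  le_refl x := subset_rfl
  le_trans x y z h h' := Set.Subset.trans h h'
  le_antisymm x y h h' := Subtype.ext (subset_antisymm h h')
  le_total x y := by
    by_cases h : x.1 ⊆ y.1
    · exact Or.inl h
    · refine Or.inr ?_
      obtain ⟨z, hzx, hzy⟩ := not_subset.1 h
      intro w hw
      rcases le_total w z with hle | hle
      · exact x.2 hle hzx
      · exact absurd (y.2 hle hw) hzy
  toDecidableLE := fun _ _ => Classical.propDecidable _

theorem Low.le_iff {x y : Low X} : x ≤ y ↔ x.1 ⊆ y.1 := ⟨fun h => h, fun h => h⟩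

theorem Low.lt_iff {x y : Low X} : x < y ↔ x.1 ⊆ y.1 ∧ ¬ y.1 ⊆ x.1 := by
  rw [lt_iff_le_not_ge]
  exact Iff.rfl

/-- Embedding of `X` into its lower sets. -/
def Low.emb (z : X) : Low X := ⟨Set.Iic z, fun _ _ hvu hu => le_trans hvu hu⟩

theorem Low.emb_lt_iff {z w : X} : Low.emb z < Low.emb w ↔ z < w := by
  rw [Low.lt_iff]
  constructor
  · rintro ⟨hsub, hnsub⟩
    rcases lt_or_ge z w with h | h
    · exact h
    · exact absurd (fun u (hu : u ≤ w) => le_trans hu h) hnsub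
  · intro h
    exact ⟨fun u (hu : u ≤ z) => le_trans hu (le_of_lt h),
      fun hsub => absurd (hsub (le_refl w)) (not_le.2 h)⟩

theorem Low.emb_injective : Function.Injective (Low.emb (X := X)) :=
  fun _ _ h => Set.Iic_injective (congrArg Subtype.val h)

end Low

section Prod

theorem satProd {X : Type u} [LinearOrder X] {S : Type u} [LinearOrder S] {μ : Cardinal.{u}}
    (hS : SatDense S μ) : SatDense (Lex (Low X × S)) μ := by
  intro A B hA hB hAB
  classical
  have hm : IsLowerSet (⋃ p ∈ A, ((ofLex p).1.1 : Set X)) := by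
    intro u v hvu hu
    rw [mem_iUnion₂] at hu ⊢
    obtain ⟨p, hp, hup⟩ := hu
    exact ⟨p, hp, (ofLex p).1.2 hvu hup⟩
  set m : Low X := ⟨⋃ p ∈ A, ((ofLex p).1.1 : Set X), hm⟩ with hmdef
  have hmA : ∀ p ∈ A, (ofLex p).1 ≤ m := by
    intro p hp
    have hsub : ((ofLex p).1.1 : Set X) ⊆ ⋃ r ∈ A, ((ofLex r).1.1 : Set X) :=
      Set.subset_iUnion₂ (s := fun r _ => ((ofLex r).1.1 : Set X)) p hp
    exact Low.le_iff.2 hsub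
  have hmB : ∀ q ∈ B, m ≤ (ofLex q).1 := by
    intro q hq
    rw [Low.le_iff]
    refine iUnion₂_subset ?_
    intro p hp
    have hlt := hAB p hp q hq
    rw [show p = toLex (ofLex p) from rfl, show q = toLex (ofLex q) from rfl,
      Prod.Lex.lt_iff] at hlt
    rcases hlt with h | ⟨h, -⟩
    · exact Low.le_iff.1 (le_of_lt h)
    · exact Low.le_iff.1 h.le
  set SA : Set S := {z | toLex (m, z) ∈ A} with hSA
  set SB : Set S := {z | toLex (m, z) ∈ B} with hSB
  have hinj : Function.Injective (fun z : S => toLex (m, z)) := by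
    intro z w h
    exact congrArg (fun t => (ofLex t).2) h
  have hSAcard : #SA ≤ μ :=
    le_trans (Cardinal.mk_preimage_of_injective (fun z : S => toLex (m, z)) A hinj) hA
  have hSBcard : #SB ≤ μ :=
    le_trans (Cardinal.mk_preimage_of_injective (fun z : S => toLex (m, z)) B hinj) hB
  obtain ⟨t, ht1, ht2⟩ := hS SA SB hSAcard hSBcard (by
    intro z hz w hw
    have hlt := hAB _ hz _ hw
    rw [Prod.Lex.lt_iff] at hlt
    rcases hlt with h | ⟨-, h⟩
    · exact absurd h (lt_irrefl m)
    · exact h)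
  refine ⟨toLex (m, t), ?_, ?_⟩
  · intro p hp
    rw [show p = toLex (ofLex p) from rfl, Prod.Lex.lt_iff]
    rcases lt_or_eq_of_le (hmA p hp) with h | h
    · exact Or.inl h
    · refine Or.inr ⟨h, ?_⟩
      refine ht1 (ofLex p).2 ?_
      rw [hSA]
      have : toLex (m, (ofLex p).2) = p := by
        rw [← h]
        rfl
      rw [Set.mem_setOf_eq, this]
      exact hp
  · intro q hq
    rw [show q = toLex (ofLex q) from rfl, Prod.Lex.lt_iff]
    rcases lt_or_eq_of_le (hmB q hq) with h | h
    · exact Or.inl h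
    · refine Or.inr ⟨h, ?_⟩
      refine ht2 (ofLex q).2 ?_
      rw [hSB]
      have : toLex (m, (ofLex q).2) = q := by
        rw [h]
        rfl
      rw [Set.mem_setOf_eq, this]
      exact hq

end Prod

section Trans

theorem atrans {κ N : Type u} [LinearOrder N] {D : Ultrafilter κ} {a : N → N → Set κ}
    (ha : InS D a) {i : κ} {s t u : N} (hst : i ∈ a s t) (htu : i ∈ a t u) : i ∈ a s u := by
  obtain ⟨h1, h2, h3, h4⟩ := ha
  have hST : s ≠ t := by rintro rfl; rw [h1] at hst; exact hst
  have hTU : t ≠ u := by rintro rfl; rw [h1] at htu; exact htu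
  have hSU : s ≠ u := by
    rintro rfl
    rw [h2 s t hST] at hst
    exact hst htu
  by_contra hns
  have hus : i ∈ a u s := by
    rw [h2 u s (Ne.symm hSU)]
    exact hns
  rcases lt_trichotomy s t with h_st | h | h_ts
  · rcases lt_trichotomy t u with h_tu | h | h_ut
    · exact hns ((h4 s t u h_st h_tu).1 ⟨hst, htu⟩)
    · exact absurd h hTU
    · rcases lt_trichotomy s u with h_su | h | h_us
      · have : i ∈ a t s := (h4 s u t h_su h_ut).2 ⟨htu, hus⟩
        rw [h2 s t hST] at hst
        exact hst this
      · exact absurd h hSU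
      · have : i ∈ a u t := (h4 u s t h_us h_st).1 ⟨hus, hst⟩
        rw [h2 t u hTU] at htu
        exact htu this
  · exact absurd h hST
  · rcases lt_trichotomy t u with h_tu | h | h_ut
    · rcases lt_trichotomy s u with h_su | h | h_us
      · have : i ∈ a u t := (h4 t s u h_ts h_su).2 ⟨hus, hst⟩
        rw [h2 t u hTU] at htu
        exact htu this
      · exact absurd h hSU
      · have : i ∈ a t s := (h4 t u s h_tu h_us).1 ⟨htu, hus⟩
        rw [h2 s t hST] at hst
        exact hst this
    · exact absurd h hTU
    · exact hns ((h4 u t s h_ut h_ts).2 ⟨hst, htu⟩)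

end Trans

end SatRep

open SatRep in
theorem exists_representation'
    {κ : Type u} [Infinite κ] (D : Ultrafilter κ)
    {l₁ l₂ : Cardinal.{u}} (hreg₁ : l₁.IsRegular) (hreg₂ : l₂.IsRegular)
    (N : Type u) [LinearOrder N]
    (a : N → N → Set κ) (ha : InS D a) :
    ∃ (M : Type u) (_ : LinearOrder M), SatDense M (l₁ + l₂) ∧
      ∃ f : N → κ → M,
        (∀ s t : N, s < t → a s t = {i | f s i < f t i}) ∧
        (∀ s t : N, s ≠ t → Disjoint (Set.range (f s)) (Set.range (f t))) := by
  classical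
  -- strict total order on κ × N induced by a well-ordering of κ and the family a
  set R : κ × N → κ × N → Prop :=
    fun p q => WellOrderingRel p.1 q.1 ∨ (p.1 = q.1 ∧ p.1 ∈ a p.2 q.2) with hR
  have hirr : ∀ p, ¬ R p p := by
    rintro ⟨i, s⟩ (h | ⟨-, h⟩)
    · exact irrefl_of WellOrderingRel i h
    · rw [ha.1 s] at h
      exact h
  have htrans : ∀ {p q r : κ × N}, R p q → R q r → R p r := by
    rintro ⟨i, s⟩ ⟨j, t⟩ ⟨k, u⟩ (h | ⟨rfl, h⟩) (h' | ⟨he', h'⟩)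
    · exact Or.inl (trans_of WellOrderingRel h h')
    · exact Or.inl (he' ▸ h)
    · exact Or.inl h'
    · exact Or.inr ⟨he', atrans ha h (he' ▸ h')⟩
  have htot : ∀ p q : κ × N, p ≠ q → R p q ∨ R q p := by
    rintro ⟨i, s⟩ ⟨j, t⟩ hne
    rcases trichotomous_of WellOrderingRel i j with h | rfl | h
    · exact Or.inl (Or.inl h)
    · have hst : s ≠ t := fun h => hne (by rw [h])
      by_cases hm : i ∈ a s t
      · exact Or.inl (Or.inr ⟨rfl, hm⟩)
      · refine Or.inr (Or.inr ⟨rfl, ?_⟩)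
        rw [ha.2.1 t s (Ne.symm hst)]
        exact hm
    · exact Or.inr (Or.inl h)
  letI instM0 : LinearOrder (κ × N) := mkLin R hirr (fun h h' => htrans h h') htot
  -- the index order ι
  have hμ : ℵ₀ ≤ l₁ + l₂ := le_trans hreg₁.aleph0_le le_self_add
  set ι : Type u := (Order.succ (l₁ + l₂)).ord.ToType with hι
  haveI : IsWellOrder ι (· < ·) := isWellOrder_lt
  have hbdd : ∀ T : Set ι, #T ≤ l₁ + l₂ → ∃ γ : ι, ∀ β ∈ T, β < γ := by
    intro T hT
    have hcof : #T < Ordinal.cof (Ordinal.type ((· < ·) : ι → ι → Prop)) := by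
      rw [Ordinal.type_toType, (Cardinal.isRegular_succ hμ).cof_eq]
      exact lt_of_le_of_lt hT (Order.lt_succ _)
    rw [Ordinal.cof_type] at hcof
    by_contra hc
    push_neg at hc
    refine absurd (Order.cof_le (s := T) (fun a => ?_)) (not_le.2 hcof)
    obtain ⟨b, hb, hab⟩ := hc a
    exact ⟨b, hb, hab⟩
  have hSat : SatDense (Lex (Low (κ × N) × Qset ι)) (l₁ + l₂) := satProd (satQ hμ hbdd)
  -- base point of Qset ι
  have hnemp : Nonempty ι := by
    rw [hι, Ordinal.toType_nonempty_iff_ne_zero]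
    exact (Cardinal.isRegular_succ hμ).ord_pos.ne'
  obtain ⟨c0⟩ := hnemp
  refine ⟨Lex (Low (κ × N) × Qset ι), inferInstance, hSat, ?_⟩
  set q0 : Qset ι := ⟨fun β => decide (β = c0), c0, by simp, fun δ h => decide_eq_false (ne_of_gt h)⟩
    with hq0
  refine ⟨fun s i => toLex (Low.emb (i, s), q0), ?_, ?_⟩
  · intro s t hst
    ext i
    simp only [Set.mem_setOf_eq]
    rw [Prod.Lex.lt_iff]
    constructor
    · intro hi
      left
      change Low.emb (i, s) < Low.emb (i, t)
      rw [Low.emb_lt_iff]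
      exact (Or.inr ⟨rfl, hi⟩ : R (i, s) (i, t))
    · rintro (hlt | ⟨-, habs⟩)
      · change Low.emb (i, s) < Low.emb (i, t) at hlt
        rw [Low.emb_lt_iff] at hlt
        rcases (hlt : R (i, s) (i, t)) with h | ⟨-, h⟩
        · exact absurd h (irrefl_of WellOrderingRel i)
        · exact h
      · exact absurd habs (lt_irrefl q0)
  · intro s t hs
    rw [Set.disjoint_left]
    rintro x ⟨i, rfl⟩ ⟨j, hj⟩
    have h1 := congrArg (fun z => (ofLex z).1) hj
    have hp : ((j, t) : κ × N) = (i, s) := Low.emb_injective h1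
    exact hs (congrArg Prod.snd hp).symm


/-- For every `ā ∈ S_c` there are a `(l₁+l₂)⁺`-saturated dense linear order `M` and
functions `f s : κ → M` (`s ∈ N`) with pairwise disjoint ranges such that
`a s t = {i < κ : f s i < f t i}` whenever `s < t` in `N`. -/
theorem exists_representation
    {κ : Type u} [Infinite κ] (D : Ultrafilter κ)
    (huniform : ∀ A : Set κ, A ∈ D → Cardinal.mk A = Cardinal.mk κ)
    {l₁ l₂ : Cardinal.{u}} (hreg₁ : l₁.IsRegular) (hreg₂ : l₂.IsRegular)
    (hκ₁ : Cardinal.mk κ < l₁) (hκ₂ : Cardinal.mk κ < l₂)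
    (N : Type u) [LinearOrder N] (N₁ : Set N)
    (hinit : ∀ x ∈ N₁, ∀ y, y ≤ x → y ∈ N₁)
    (hcard : Cardinal.mk N ≤ Cardinal.powerlt 2 l₁ + Cardinal.powerlt 2 l₂)
    (hcof : cofinality N₁ = l₁) (hcoin : coinitiality N₁ᶜ = l₂)
    (hsat₁ : SatDenseOn N₁ (min l₁ l₂)) (hsat₂ : SatDenseOn N₁ᶜ (min l₁ l₂))
    (a : N → N → Set κ) (ha : InS D a) :
    ∃ (M : Type u) (_ : LinearOrder M), SatDense M (l₁ + l₂) ∧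
      ∃ f : N → κ → M,
        (∀ s t : N, s < t → a s t = {i | f s i < f t i}) ∧
        (∀ s t : N, s ≠ t → Disjoint (Set.range (f s)) (Set.range (f t))) := by
  exact exists_representation' D hreg₁ hreg₂ N a ha
end

section
/- Let κ be an infinite cardinal, let D be a uniform ultrafilter on κ, let λ1 and λ2 be regular cardinals greater than κ, let N = N1 + N2 be a linear order as in the context, and let ā = ⟨a_{s,t} : s, t ∈ N⟩ ∈ S_c. Suppose M is a (λ1+λ2)⁺-saturated dense linear order and f_s : κ → M (s ∈ N) are functions with pairwise disjoint ranges such that a_{s,t} = {i < κ : f_s(i) < f_t(i)} whenever s < t in N. Then ā is c-solvable if and only if there exists g : κ → M such that in the ultrapower M^κ/D we have f_s/D < g/D < f_t/D for every s ∈ N1 and t ∈ N2. -/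
universe u

open Set

/-- Suppose `M` is a `(l₁+l₂)⁺`-saturated dense linear order and `f s : κ → M`
(`s ∈ N`) have pairwise disjoint ranges and represent `ā ∈ S_c`, i.e.
`a s t = {i : f s i < f t i}` for `s < t`. Then `ā` is `c`-solvable iff some
`g : κ → M` satisfies `f s /D < g/D < f t /D` in `M^κ/D` for all `s ∈ N₁`, `t ∈ N₂`. -/
theorem solvable_iff_realized
    {κ : Type u} [Infinite κ] (D : Ultrafilter κ)
    (huniform : ∀ A : Set κ, A ∈ D → Cardinal.mk A = Cardinal.mk κ)
    {l₁ l₂ : Cardinal.{u}} (hreg₁ : l₁.IsRegular) (hreg₂ : l₂.IsRegular)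
    (hκ₁ : Cardinal.mk κ < l₁) (hκ₂ : Cardinal.mk κ < l₂)
    (N : Type u) [LinearOrder N] (N₁ : Set N)
    (hinit : ∀ x ∈ N₁, ∀ y, y ≤ x → y ∈ N₁)
    (hcard : Cardinal.mk N ≤ Cardinal.powerlt 2 l₁ + Cardinal.powerlt 2 l₂)
    (hcof : cofinality N₁ = l₁) (hcoin : coinitiality N₁ᶜ = l₂)
    (hsat₁ : SatDenseOn N₁ (min l₁ l₂)) (hsat₂ : SatDenseOn N₁ᶜ (min l₁ l₂))
    (a : N → N → Set κ) (ha : InS D a)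
    (M : Type u) [LinearOrder M] (hM : SatDense M (l₁ + l₂))
    (f : N → κ → M)
    (hrep : ∀ s t : N, s < t → a s t = {i | f s i < f t i})
    (hdisj : ∀ s t : N, s ≠ t → Disjoint (Set.range (f s)) (Set.range (f t))) :
    Solvable D N₁ a ↔
      ∃ g : κ → M, ∀ s ∈ N₁, ∀ t ∈ N₁ᶜ,
        (f s : Filter.Germ (D : Filter κ) M) < (g : Filter.Germ (D : Filter κ) M) ∧
        (g : Filter.Germ (D : Filter κ) M) < (f t : Filter.Germ (D : Filter κ) M) := by
  classical
  -- s < t whenever s ∈ N₁, t ∉ N₁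
  have hlt : ∀ s ∈ N₁, ∀ t ∈ N₁ᶜ, s < t := by
    intro s hs t ht
    by_contra h
    exact ht (hinit s hs t (not_lt.mp h))
  constructor
  · rintro ⟨b, hb0, hb1, hb2, hb3⟩
    -- choose a cofinal set S ⊆ N₁ of size l₁
    have hSmem : l₁ ∈ {c | ∃ S : Set N, S ⊆ N₁ ∧ (∀ x ∈ N₁, ∃ y ∈ S, x ≤ y) ∧
        Cardinal.mk S = c} := by
      rw [← hcof]
      exact csInf_mem ⟨_, N₁, Subset.rfl, fun x hx => ⟨x, hx, le_rfl⟩, rfl⟩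
    obtain ⟨S, hS₁, hScof, hScard⟩ := hSmem
    have hTmem : l₂ ∈ {c | ∃ S : Set N, S ⊆ N₁ᶜ ∧ (∀ x ∈ N₁ᶜ, ∃ y ∈ S, y ≤ x) ∧
        Cardinal.mk S = c} := by
      rw [← hcoin]
      exact csInf_mem ⟨_, N₁ᶜ, Subset.rfl, fun x hx => ⟨x, hx, le_rfl⟩, rfl⟩
    obtain ⟨T, hT₁, hTcoin, hTcard⟩ := hTmem
    -- key pointwise fact from the solution
    have hkey : ∀ s ∈ N₁, ∀ t ∈ N₁ᶜ, ∀ i : κ, i ∈ b s → i ∉ b t → f s i < f t i := by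
      intro s hs t ht i hib hnib
      have h1 : ltPlus N₁ (Sum.inl s) (Sum.inr ()) := hs
      have h2 : ltPlus N₁ (Sum.inr ()) (Sum.inl t) := ht
      have hsub := (hb3 (Sum.inl s) (Sum.inr ()) (Sum.inl t) h1 h2).1
      have : i ∈ a s t := hsub ⟨hib, hnib⟩
      rwa [hrep s t (hlt s hs t ht)] at this
    -- define g pointwise by saturation
    have key : ∀ i : κ, ∃ x : M, (∀ s, s ∈ S → i ∈ b s → f s i < x) ∧
        (∀ t, t ∈ T → i ∉ b t → x < f t i) := by
      intro i
      set A : Set M := (fun s => f s i) '' {s | s ∈ S ∧ i ∈ b s} with hA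
      set B : Set M := (fun t => f t i) '' {t | t ∈ T ∧ i ∉ b t} with hB
      have hcA : Cardinal.mk A ≤ l₁ + l₂ := by
        calc Cardinal.mk A ≤ Cardinal.mk {s | s ∈ S ∧ i ∈ b s} := Cardinal.mk_image_le
          _ ≤ Cardinal.mk S := Cardinal.mk_le_mk_of_subset (fun x hx => hx.1)
          _ = l₁ := hScard
          _ ≤ l₁ + l₂ := self_le_add_right _ _
      have hcB : Cardinal.mk B ≤ l₁ + l₂ := by
        calc Cardinal.mk B ≤ Cardinal.mk {t | t ∈ T ∧ i ∉ b t} := Cardinal.mk_image_le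
          _ ≤ Cardinal.mk T := Cardinal.mk_le_mk_of_subset (fun x hx => hx.1)
          _ = l₂ := hTcard
          _ ≤ l₁ + l₂ := self_le_add_left _ _
      have hord : ∀ x ∈ A, ∀ y ∈ B, x < y := by
        rintro _ ⟨s, ⟨hsS, hib⟩, rfl⟩ _ ⟨t, ⟨htT, hnib⟩, rfl⟩
        exact hkey s (hS₁ hsS) t (hT₁ htT) i hib hnib
      obtain ⟨x, hx1, hx2⟩ := hM A B hcA hcB hord
      exact ⟨x, fun s hsS hib => hx1 _ ⟨s, ⟨hsS, hib⟩, rfl⟩,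
        fun t htT hnib => hx2 _ ⟨t, ⟨htT, hnib⟩, rfl⟩⟩
    choose g hg1 hg2 using key
    refine ⟨g, ?_⟩
    intro s hs t ht
    constructor
    · rw [Filter.Germ.coe_lt]
      obtain ⟨s', hs'S, hss'⟩ := hScof s hs
      have hbD : b s' ∈ (D : Filter κ) :=
        hb2 (Sum.inl s') (Sum.inr ()) (hS₁ hs'S)
      rcases eq_or_lt_of_le hss' with heq | hlt'
      · subst heq
        exact Filter.mem_of_superset hbD (fun i hi => hg1 i s hs'S hi)
      · have haD : a s s' ∈ (D : Filter κ) := ha.2.2.1 s s' hlt'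
        refine Filter.mem_of_superset (Filter.inter_mem haD hbD) ?_
        rintro i ⟨hia, hib⟩
        have h1 : f s i < f s' i := by
          rw [hrep s s' hlt'] at hia; exact hia
        exact h1.trans (hg1 i s' hs'S hib)
    · rw [Filter.Germ.coe_lt]
      obtain ⟨t', ht'T, htt'⟩ := hTcoin t ht
      have hbD : (b t')ᶜ ∈ (D : Filter κ) :=
        hb2 (Sum.inr ()) (Sum.inl t') (hT₁ ht'T)
      rcases eq_or_lt_of_le htt' with heq | hlt'
      · subst heq
        exact Filter.mem_of_superset hbD (fun i hi => hg2 i t' ht'T hi)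
      · have haD : a t' t ∈ (D : Filter κ) := ha.2.2.1 t' t hlt'
        refine Filter.mem_of_superset (Filter.inter_mem hbD haD) ?_
        rintro i ⟨hib, hia⟩
        have h1 : f t' i < f t i := by
          rw [hrep t' t hlt'] at hia; exact hia
        exact (hg2 i t' ht'T hib).trans h1
  · rintro ⟨g, hg⟩
    -- N₁ and N₁ᶜ are nonempty
    have hN1 : N₁.Nonempty := by
      by_contra h
      rw [Set.not_nonempty_iff_eq_empty] at h
      have h0 : cofinality N₁ ≤ 0 := by
        apply csInf_le (OrderBot.bddBelow _)
        exact ⟨∅, by simp [h], by simp [h], by simp⟩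
      rw [hcof] at h0
      exact hreg₁.pos.ne' (le_antisymm h0 zero_le)
    have hN2 : N₁ᶜ.Nonempty := by
      by_contra h
      rw [Set.not_nonempty_iff_eq_empty] at h
      have h0 : coinitiality N₁ᶜ ≤ 0 := by
        apply csInf_le (OrderBot.bddBelow _)
        exact ⟨∅, by simp [h], by simp [h], by simp⟩
      rw [hcoin] at h0
      exact hreg₂.pos.ne' (le_antisymm h0 zero_le)
    refine ⟨fun s => {i | f s i < g i}, ?_, ?_, ?_, ?_⟩
    · rintro (s | ⟨⟩)
      · exact ha.1 s
      · rfl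
    · rintro (s | ⟨⟩) (t | ⟨⟩) hne
      · exact ha.2.1 s t (by simpa using hne)
      · exact (compl_compl _).symm
      · rfl
      · exact absurd rfl hne
    · rintro (s | ⟨⟩) (t | ⟨⟩) h
      · exact ha.2.2.1 s t h
      · -- h : s ∈ N₁; goal {i | f s i < g i} ∈ D
        obtain ⟨t, ht⟩ := hN2
        have := (hg s h t ht).1
        rw [Filter.Germ.coe_lt] at this
        exact this
      · -- h : t ∉ N₁; goal {i | f t i < g i}ᶜ ∈ D
        obtain ⟨s, hs⟩ := hN1
        have h2 := (hg s hs t h).2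
        rw [Filter.Germ.coe_lt] at h2
        refine Filter.mem_of_superset h2 ?_
        intro i hi
        exact not_lt.mpr (le_of_lt hi)
      · exact absurd h (by simp [ltPlus])
    · rintro (s₁ | ⟨⟩) (s₂ | ⟨⟩) (s₃ | ⟨⟩) h₁ h₂
      · exact ha.2.2.2 s₁ s₂ s₃ h₁ h₂
      · -- s₁ < s₂ in N, s₂ ∈ N₁
        have h12 : s₁ < s₂ := h₁
        simp only [aExt]
        constructor
        · rintro i ⟨hia, hib⟩
          have h1 : f s₁ i < f s₂ i := by
            have := hia
            rw [hrep _ _ h12] at this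
            exact this
          exact h1.trans hib
        · rintro i ⟨hib, hia⟩
          have hge : f s₂ i ≤ f s₁ i := by
            have := hia
            rw [ha.2.1 s₂ s₁ (ne_of_gt h12), mem_compl_iff, hrep _ _ h12] at this
            exact not_lt.mp this
          simp only [mem_compl_iff, mem_setOf_eq] at hib ⊢
          intro hc
          exact hib (lt_of_le_of_lt hge hc)
      · -- s₁ ∈ N₁, s₃ ∉ N₁
        have hs₁ : s₁ ∈ N₁ := h₁
        have hs₃ : s₃ ∈ N₁ᶜ := h₂
        have h13 : s₁ < s₃ := hlt s₁ hs₁ s₃ hs₃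
        simp only [aExt]
        constructor
        · rintro i ⟨hib, hnib⟩
          rw [hrep _ _ h13]
          simp only [mem_compl_iff, mem_setOf_eq] at hib hnib ⊢
          exact lt_of_lt_of_le hib (not_lt.mp hnib)
        · rintro i ⟨hib, hnib⟩
          rw [ha.2.1 s₃ s₁ (ne_of_gt h13), mem_compl_iff, hrep _ _ h13]
          simp only [mem_compl_iff, mem_setOf_eq] at hib hnib ⊢
          have hle : g i ≤ f s₁ i := not_lt.mp hnib
          exact not_lt.mpr (le_of_lt (lt_of_lt_of_le hib hle))
      · exact absurd h₂ (by simp [ltPlus])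
      · -- s₂ ∉ N₁, s₂ < s₃
        have h23 : s₂ < s₃ := h₂
        simp only [aExt]
        constructor
        · rintro i ⟨hnib, hia⟩
          have h1 : f s₂ i < f s₃ i := by
            have := hia
            rw [hrep _ _ h23] at this
            exact this
          simp only [mem_compl_iff, mem_setOf_eq] at hnib ⊢
          intro hc
          exact hnib (h1.trans hc)
        · rintro i ⟨hia, hib⟩
          have hle : f s₃ i ≤ f s₂ i := by
            have := hia
            rw [ha.2.1 s₃ s₂ (ne_of_gt h23), mem_compl_iff, hrep _ _ h23] at this
            exact not_lt.mp this
          simp only [mem_setOf_eq] at hib ⊢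
          exact lt_of_le_of_lt hle hib
      · exact absurd h₂ h₁
      · exact absurd h₁ (by simp [ltPlus])
      · exact absurd h₁ (by simp [ltPlus])
end

section
/- Let κ be an infinite cardinal, let D be an ultrafilter on κ, let μ be an infinite cardinal, and let J be a μ⁺-saturated dense linear order. Then the ultrapower J^κ/D has no internal cut of cofinality (λ1, λ2) with λ1 ≤ μ and λ2 ≤ μ; that is, every internal cut (J1, J2) of J^κ/D satisfies: the least cardinality of a cofinal subset of J1 exceeds μ, or the least cardinality of a coinitial subset of J2 exceeds μ. -/
universe u

open Set

/-- The cut `(J₁, J₂)` of the ultrapower `J^κ/D` is internal: for each `i < κ` there is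
a partition of `J` into an initial segment `P i` and its (final-segment) complement
such that `J₁ = ∏ (P i) / D` and `J₂ = ∏ (P i)ᶜ / D`. -/
def IsInternalCutGerm {κ : Type u} (D : Ultrafilter κ) (J : Type u) [LinearOrder J]
    (J₁ J₂ : Set (Filter.Germ (D : Filter κ) J)) : Prop :=
  ∃ P : κ → Set J,
    (∀ i, ∀ x ∈ P i, ∀ y, y ≤ x → y ∈ P i) ∧
    J₁ = {x | ∃ f : κ → J, x = (f : Filter.Germ (D : Filter κ) J) ∧
            {i | f i ∈ P i} ∈ (D : Filter κ)} ∧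
    J₂ = {x | ∃ f : κ → J, x = (f : Filter.Germ (D : Filter κ) J) ∧
            {i | f i ∉ P i} ∈ (D : Filter κ)}

/-- If `J` is a `μ⁺`-saturated dense linear order, `μ` infinite, then the ultrapower
`J^κ/D` has no internal cut of cofinality `(l₁, l₂)` with `l₁, l₂ ≤ μ`: every internal
cut `(J₁, J₂)` has cofinality `> μ` on one of its two sides. -/
theorem no_small_internal_cut_of_saturated
    {κ : Type u} [Infinite κ] (D : Ultrafilter κ)
    {μ : Cardinal.{u}} (hμ : Cardinal.aleph0 ≤ μ)
    (J : Type u) [LinearOrder J] (hJ : SatDense J μ)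
    (J₁ J₂ : Set (Filter.Germ (D : Filter κ) J))
    (hcut : IsCut J₁ J₂) (hint : IsInternalCutGerm D J J₁ J₂) :
    μ < cofinality J₁ ∨ μ < coinitiality J₂ := by
  by_contra hcon
  push_neg at hcon
  obtain ⟨hc1, hc2⟩ := hcon
  obtain ⟨P, hP, hJ1, hJ2⟩ := hint
  obtain ⟨hne1, hne2, hunion, _hdisj, hlt, hcof, hcoi⟩ := hcut
  -- obtain small cofinal S in J₁
  have hS : cofinality J₁ ∈ {c | ∃ S : Set _, S ⊆ J₁ ∧ (∀ x ∈ J₁, ∃ y ∈ S, x ≤ y) ∧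
      Cardinal.mk S = c} := by
    apply csInf_mem
    exact ⟨Cardinal.mk J₁, J₁, le_refl _, fun x hx => ⟨x, hx, le_refl x⟩, rfl⟩
  obtain ⟨S, hSsub, hScof, hSmk⟩ := hS
  have hSμ : Cardinal.mk S ≤ μ := hSmk ▸ hc1
  have hT : coinitiality J₂ ∈ {c | ∃ S : Set _, S ⊆ J₂ ∧ (∀ x ∈ J₂, ∃ y ∈ S, y ≤ x) ∧
      Cardinal.mk S = c} := by
    apply csInf_mem
    exact ⟨Cardinal.mk J₂, J₂, le_refl _, fun x hx => ⟨x, hx, le_refl x⟩, rfl⟩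
  obtain ⟨T, hTsub, hTcoi, hTmk⟩ := hT
  have hTμ : Cardinal.mk T ≤ μ := hTmk ▸ hc2
  -- choose representatives
  have hrepS : ∀ s : S, ∃ f : κ → J, (s : Filter.Germ (D : Filter κ) J) = ↑f ∧
      {i | f i ∈ P i} ∈ (D : Filter κ) := by
    intro s
    have : (s : Filter.Germ (D : Filter κ) J) ∈ J₁ := hSsub s.2
    rw [hJ1] at this
    exact this
  have hrepT : ∀ t : T, ∃ g : κ → J, (t : Filter.Germ (D : Filter κ) J) = ↑g ∧
      {i | g i ∉ P i} ∈ (D : Filter κ) := by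
    intro t
    have : (t : Filter.Germ (D : Filter κ) J) ∈ J₂ := hTsub t.2
    rw [hJ2] at this
    exact this
  choose F hF hFP using hrepS
  choose G hG hGP using hrepT
  -- define pointwise sets
  set A : κ → Set J := fun i => (fun s : S => F s i) '' {s | F s i ∈ P i} with hA
  set B : κ → Set J := fun i => (fun t : T => G t i) '' {t | G t i ∉ P i} with hB
  have hAB : ∀ i, ∀ a ∈ A i, ∀ b ∈ B i, a < b := by
    intro i a ha b hb
    obtain ⟨s, hs, rfl⟩ := ha
    obtain ⟨t, ht, rfl⟩ := hb
    by_contra hle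
    exact ht (hP i _ hs _ (not_lt.mp hle))
  have hAμ : ∀ i, Cardinal.mk (A i) ≤ μ := fun i =>
    ((Cardinal.mk_image_le).trans (Cardinal.mk_set_le _)).trans hSμ
  have hBμ : ∀ i, Cardinal.mk (B i) ≤ μ := fun i =>
    ((Cardinal.mk_image_le).trans (Cardinal.mk_set_le _)).trans hTμ
  choose x hxA hxB using fun i => hJ (A i) (B i) (hAμ i) (hBμ i) (hAB i)
  set H : Filter.Germ (D : Filter κ) J := ↑x with hH
  -- every s ∈ S is below H
  have hSH : ∀ s : S, (s : Filter.Germ (D : Filter κ) J) < H := by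
    intro s
    rw [hF s, hH, Filter.Germ.coe_lt]
    filter_upwards [hFP s] with i hi
    exact hxA i _ ⟨s, hi, rfl⟩
  have hTH : ∀ t : T, H < (t : Filter.Germ (D : Filter κ) J) := by
    intro t
    rw [hG t, hH, Filter.Germ.coe_lt]
    filter_upwards [hGP t] with i hi
    exact hxB i _ ⟨t, hi, rfl⟩
  have hHmem : H ∈ J₁ ∪ J₂ := hunion ▸ Set.mem_univ H
  rcases hHmem with hH1 | hH2
  · obtain ⟨y, hy, hyH⟩ := hScof H hH1
    exact absurd (hSH ⟨y, hy⟩) (not_lt.mpr hyH)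
  · obtain ⟨y, hy, hyH⟩ := hTcoi H hH2
    exact absurd (hTH ⟨y, hy⟩) (not_lt.mpr hyH)
end

section
/- Let κ be an infinite cardinal and let D be an ultrafilter on κ. Then there is no sequence ⟨f_ξ : ξ < (2^κ)⁺⟩ of functions from κ to the ordinals such that for all ξ < ζ < (2^κ)⁺, the set {i < κ : f_ζ(i) < f_ξ(i)} belongs to D. In other words, the order <_D on ordinal-valued functions on κ, defined by f <_D g iff {i < κ : f(i) < g(i)} ∈ D, admits no strictly decreasing chain of length (2^κ)⁺. -/
universe u

open Cardinal Ordinal Set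

section ER

variable {Λ W K : Type u} [LinearOrder Λ] [WellFoundedLT Λ] [LinearOrder W] [WellFoundedLT W]

/-- The Erdős–Rado style auxiliary sequence: at each stage `β`, pick the least element of `Λ`
not yet chosen whose colors against previously chosen elements agree with those of `a`. -/
noncomputable def ERSeq (c : Λ → Λ → K) (a : Λ) : W → Λ :=
  (wellFounded_lt (α := W)).fix fun β ih =>
    dite (h := Classical.dec _) {x : Λ | (∀ γ (hγ : γ < β), ih γ hγ ≠ x) ∧
        ∀ γ (hγ : γ < β), c (ih γ hγ) x = c (ih γ hγ) a}.Nonempty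
      (fun h => (wellFounded_lt (α := Λ)).min _ h) (fun _ => a)

/-- The candidate set at stage `β` in the construction of `ERSeq`. -/
def ERSet (c : Λ → Λ → K) (a : Λ) (β : W) : Set Λ :=
  {x | (∀ γ (_ : γ < β), ERSeq c a γ ≠ x) ∧
      ∀ γ (_ : γ < β), c (ERSeq c a γ) x = c (ERSeq c a γ) a}

theorem ERSeq_def (c : Λ → Λ → K) (a : Λ) (β : W) :
    ERSeq c a β = dite (h := Classical.dec _) (ERSet c a β).Nonempty
      (fun h => (wellFounded_lt (α := Λ)).min _ h) (fun _ => a) :=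
  WellFounded.fix_eq _ _ _

theorem self_mem_ERSet {c : Λ → Λ → K} {a : Λ} {β : W}
    (h : ∀ γ < β, ERSeq c a γ ≠ a) : a ∈ ERSet c a β :=
  ⟨h, fun _ _ => rfl⟩

theorem ERSeq_mem {c : Λ → Λ → K} {a : Λ} {β : W}
    (h : ∀ γ < β, ERSeq c a γ ≠ a) : ERSeq c a β ∈ ERSet c a β := by
  rw [ERSeq_def, dif_pos ⟨a, self_mem_ERSet h⟩]
  exact WellFounded.min_mem _ _ _

theorem ERSet_congr {c : Λ → Λ → K} {a b : Λ} {β : W}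
    (hag : ∀ γ < β, ERSeq (W := W) c a γ = ERSeq c b γ)
    (htr : ∀ γ < β, c (ERSeq c a γ) a = c (ERSeq c b γ) b) :
    ERSet c a β = ERSet c b β := by
  ext x
  simp only [ERSet, mem_setOf_eq]
  constructor
  · rintro ⟨h1, h2⟩
    refine ⟨fun γ hγ => by rw [← hag γ hγ]; exact h1 γ hγ, fun γ hγ => ?_⟩
    rw [← hag γ hγ, h2 γ hγ, htr γ hγ, hag γ hγ]
  · rintro ⟨h1, h2⟩
    refine ⟨fun γ hγ => by rw [hag γ hγ]; exact h1 γ hγ, fun γ hγ => ?_⟩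
    rw [hag γ hγ, h2 γ hγ, ← htr γ hγ, hag γ hγ]

theorem ERSeq_agree {c : Λ → Λ → K} {a b : Λ} {ρ : W}
    (ha : ∀ γ < ρ, ERSeq c a γ ≠ a) (hb : ∀ γ < ρ, ERSeq c b γ ≠ b)
    (htr : ∀ γ < ρ, c (ERSeq c a γ) a = c (ERSeq c b γ) b) :
    ∀ γ < ρ, ERSeq (W := W) c a γ = ERSeq c b γ := by
  intro γ
  induction γ using ((wellFounded_lt (α := W)).induction) with
  | _ γ IH =>
    intro hγ
    have hag : ∀ δ < γ, ERSeq (W := W) c a δ = ERSeq c b δ :=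
      fun δ hδ => IH δ hδ (hδ.trans hγ)
    have hset := ERSet_congr hag (fun δ hδ => htr δ (hδ.trans hγ))
    have hnb : (ERSet c b γ).Nonempty :=
      ⟨b, self_mem_ERSet (fun δ hδ => hb δ (hδ.trans hγ))⟩
    rw [ERSeq_def, ERSeq_def, hset, dif_pos hnb, dif_pos hnb]

theorem ERSeq_inj {c : Λ → Λ → K} {a b : Λ} {ρ : W}
    (ha : ∀ γ < ρ, ERSeq c a γ ≠ a) (hae : ERSeq c a ρ = a)
    (hb : ∀ γ < ρ, ERSeq c b γ ≠ b) (hbe : ERSeq c b ρ = b)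
    (htr : ∀ γ < ρ, c (ERSeq c a γ) a = c (ERSeq c b γ) b) : a = b := by
  have hag := ERSeq_agree ha hb htr
  have hset := ERSet_congr hag htr
  have hnb : (ERSet c b ρ).Nonempty := ⟨b, self_mem_ERSet hb⟩
  rw [← hae, ← hbe, ERSeq_def, ERSeq_def, hset, dif_pos hnb, dif_pos hnb]

/-- An Erdős–Rado style theorem: a symmetric coloring of a well-ordered set of
cardinality greater than `2 ^ #K` with colors in an infinite type `K` admits an
infinite monochromatic subset. -/
theorem exists_homog {Λ W K : Type u} [LinearOrder Λ] [WellFoundedLT Λ]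
    [LinearOrder W] [WellFoundedLT W] [Infinite K]
    (c : Λ → Λ → K) (hsym : ∀ x y, c x y = c y x)
    (hKW : #K < #W) (hWK : #W ≤ 2 ^ #K) (hIio : ∀ β : W, #(Set.Iio β) ≤ #K)
    (hcard : 2 ^ #K < #Λ) :
    ∃ i : K, ∃ T : Set Λ, T.Infinite ∧ ∀ x ∈ T, ∀ y ∈ T, x ≠ y → c x y = i := by
  by_cases hc : ∃ a : Λ, ∀ β : W, ERSeq c a β ≠ a
  · obtain ⟨a, ha⟩ := hc
    have hmem : ∀ β : W, ERSeq c a β ∈ ERSet c a β := fun β => ERSeq_mem (fun γ _ => ha γ)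
    have hinj : Function.Injective (ERSeq (W := W) c a) := by
      intro β γ h
      rcases lt_trichotomy β γ with hl | he | hl
      · exact absurd h ((hmem γ).1 β hl)
      · exact he
      · exact absurd h.symm ((hmem β).1 γ hl)
    obtain ⟨i, hi⟩ := Cardinal.exists_infinite_fiber'
      (fun β : W => c (ERSeq c a β) a) hKW
    refine ⟨i, ERSeq c a '' ((fun β : W => c (ERSeq c a β) a) ⁻¹' {i}), ?_, ?_⟩
    · exact Set.Infinite.image hinj.injOn (Set.infinite_coe_iff.mp hi)
    · rintro x ⟨β, hβ, rfl⟩ y ⟨γ, hγ, rfl⟩ hxy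
      have hβγ : β ≠ γ := fun h => hxy (by rw [h])
      rcases hβγ.lt_or_gt with hl | hl
      · rw [(hmem γ).2 β hl]
        exact hβ
      · rw [hsym, (hmem β).2 γ hl]
        exact hγ
  · push_neg at hc
    exfalso
    have hne : ∀ a : Λ, {β : W | ERSeq c a β = a}.Nonempty := fun a => by
      obtain ⟨β, hβ⟩ := hc a
      exact ⟨β, hβ⟩
    set ρ : Λ → W := fun a => (wellFounded_lt (α := W)).min _ (hne a) with hρ
    have hρe : ∀ a, ERSeq c a (ρ a) = a :=
      fun a => (wellFounded_lt (α := W)).min_mem _ (hne a)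
    have hρl : ∀ a γ, γ < ρ a → ERSeq c a γ ≠ a :=
      fun a γ hγ h => (wellFounded_lt (α := W)).not_lt_min {β : W | ERSeq c a β = a} h hγ
    have hΛ : #Λ ≤ #(Σ β : W, (Set.Iio β → K)) := by
      apply Cardinal.mk_le_of_injective
        (f := fun a : Λ => (⟨ρ a, fun γ => c (ERSeq c a γ.1) a⟩ : Σ β : W, (Set.Iio β → K)))
      intro a b h
      rw [Sigma.mk.inj_iff] at h
      obtain ⟨h1, h2⟩ := h
      rw [← h1] at h2
      have h2' := eq_of_heq h2
      have htr : ∀ γ (hγ : γ < ρ a), c (ERSeq c a γ) a = c (ERSeq c b γ) b := by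
        intro γ hγ
        exact congrFun h2' ⟨γ, hγ⟩
      exact ERSeq_inj (hρl a) (hρe a)
        (fun γ hγ => hρl b γ (h1 ▸ hγ)) (by rw [h1]; exact hρe b) htr
    have hstep : #(Σ β : W, (Set.Iio β → K)) ≤ 2 ^ #K := by
      rw [Cardinal.mk_sigma]
      calc (Cardinal.sum fun β : W => #(Set.Iio β → K))
          ≤ Cardinal.sum (fun _ : W => 2 ^ #K) := by
            apply Cardinal.sum_le_sum
            intro β
            rw [← Cardinal.power_def]
            calc (#K) ^ #(Set.Iio β) ≤ (#K) ^ (#K) :=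
                  Cardinal.power_le_power_left (Cardinal.mk_ne_zero K) (hIio β)
              _ = 2 ^ #K := Cardinal.power_self_eq (Cardinal.aleph0_le_mk K)
        _ = #W * 2 ^ #K := Cardinal.sum_const' _ _
        _ ≤ (2 ^ #K) * 2 ^ #K := mul_le_mul_left hWK _
        _ = 2 ^ #K := Cardinal.mul_eq_self
            ((Cardinal.aleph0_le_mk K).trans (le_of_lt (Cardinal.cantor _)))
    exact hcard.not_ge (hΛ.trans hstep)

end ER

/-- For an ultrafilter `D` on an infinite cardinal `κ`, the order `<_D` on
ordinal-valued functions on `κ` (defined by `f <_D g` iff `{i : f i < g i} ∈ D`)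
admits no strictly decreasing chain of length `(2^κ)⁺`: there is no sequence
`⟨f ξ : ξ < (2^κ)⁺⟩` such that `{i : f ζ i < f ξ i} ∈ D` whenever `ξ < ζ`. -/
theorem no_long_decreasing_chain
    {κ : Type u} [Infinite κ] (D : Ultrafilter κ) :
    ¬ ∃ f : (Order.succ ((2 : Cardinal.{u}) ^ Cardinal.mk κ)).ord.ToType →
        (κ → Ordinal.{u}),
      ∀ ξ ζ, ξ < ζ → {i | f ζ i < f ξ i} ∈ (D : Filter κ) := by
  rintro ⟨f, hf⟩
  have key : ∀ a b, a < b → {i | f b i < f a i}.Nonempty :=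
    fun a b h => Filter.nonempty_of_mem (hf a b h)
  obtain ⟨c, hvalid, hsym⟩ : ∃ c : (Order.succ ((2 : Cardinal.{u}) ^ Cardinal.mk κ)).ord.ToType →
      (Order.succ ((2 : Cardinal.{u}) ^ Cardinal.mk κ)).ord.ToType → κ,
      (∀ a b, a < b → f b (c a b) < f a (c a b)) ∧
      (∀ x y, c x y = c y x) := by
    classical
    refine ⟨fun a b => if h : a < b then (key a b h).choose
      else if h' : b < a then (key b a h').choose else Classical.arbitrary κ,
      fun a b h => ?_, fun x y => ?_⟩
    · simp only [dif_pos h]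
      exact (key a b h).choose_spec
    · rcases lt_trichotomy x y with h | h | h
      · simp only [dif_pos h, dif_neg (asymm h)]
      · rw [h]
      · simp only [dif_pos h, dif_neg (asymm h)]
  obtain ⟨i, T, hTinf, hThom⟩ := exists_homog (W := (Order.succ (#κ)).ord.ToType) c hsym
    (by rw [Cardinal.mk_ord_toType]; exact Order.lt_succ _)
    (by rw [Cardinal.mk_ord_toType]; exact Order.succ_le_of_lt (Cardinal.cantor _))
    (fun β => Order.lt_succ_iff.mp (Cardinal.mk_Iio_ord_toType β))
    (by rw [Cardinal.mk_ord_toType]; exact Order.lt_succ _)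
  set e := Set.Infinite.natEmbedding T hTinf with he
  obtain ⟨g, hg | hg⟩ := @exists_increasing_or_nonincreasing_subseq _ (· < ·)
    inferInstance (fun n => (e n).1)
  · -- increasing subsequence in Λ: get a decreasing sequence of ordinals at coordinate i
    have hdec : ∀ n, f (e (g (n + 1))).1 i < f (e (g n)).1 i := by
      intro n
      have hlt : (e (g n)).1 < (e (g (n + 1))).1 :=
        hg n (n + 1) n.lt_succ_self
      have hc : c (e (g n)).1 (e (g (n + 1))).1 = i :=
        hThom _ (e (g n)).2 _ (e (g (n + 1))).2 (ne_of_lt hlt)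
      have hv := hvalid _ _ hlt
      rwa [hc] at hv
    exact (RelEmbedding.natGT (fun n => f (e (g n)).1 i) hdec).not_wellFounded
      (wellFounded_lt)
  · -- nonincreasing: it is a strictly decreasing sequence in a well-order, contradiction
    have hdec : ∀ n, (e (g (n + 1))).1 < (e (g n)).1 := by
      intro n
      have hne : (e (g (n + 1))).1 ≠ (e (g n)).1 := by
        intro h
        have h2 : n + 1 = n := g.injective (e.injective (Subtype.ext h))
        omega
      exact lt_of_le_of_ne (not_lt.mp (hg n (n + 1) n.lt_succ_self)) hne
    exact (RelEmbedding.natGT _ hdec).not_wellFounded (wellFounded_lt)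
end
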